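/- arXiv:1002.1868 — 2 statements merged into one kernel-verified Lean document; each statement's English description precedes it below -/
import Mathlib

section
/- If a relation r on a type α is terminating (well-founded in the reverse direction, i.e., there is no infinite chain t₁ r t₂ r t₃ r ⋯) and locally confluent (whenever s r t₁ and s r t₂, there exists t with t₁ r* t and t₂ r* t, where r* is the reflexive-transitive closure), then r is confluent (whenever s r* t₁ and s r* t₂, there exists t with t₁ r* t and t₂ r* t). -/
theorem stmt_6 {α : Type*} (r : α → α → Prop)
    (hterm : WellFounded (flip r))
    (hlc : ∀ s t₁ t₂, r s t₁ → r s t₂ →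
      ∃ t, Relation.ReflTransGen r t₁ t ∧ Relation.ReflTransGen r t₂ t) :
    ∀ s t₁ t₂, Relation.ReflTransGen r s t₁ → Relation.ReflTransGen r s t₂ →
      ∃ t, Relation.ReflTransGen r t₁ t ∧ Relation.ReflTransGen r t₂ t := by
  intro s
  induction s using hterm.induction with
  | _ s ih =>
    intro t₁ t₂ h₁ h₂
    rcases h₁.cases_head with rfl | ⟨a, hsa, hat₁⟩
    · exact ⟨t₂, h₂, .refl⟩
    rcases h₂.cases_head with rfl | ⟨b, hsb, hbt₂⟩
    · exact ⟨t₁, .refl, Relation.ReflTransGen.head hsa hat₁⟩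
    obtain ⟨c, hac, hbc⟩ := hlc s a b hsa hsb
    obtain ⟨d, ht₁d, hcd⟩ := ih a hsa t₁ c hat₁ hac
    obtain ⟨e, ht₂e, hde⟩ := ih b hsb t₂ d hbt₂ (hbc.trans hcd)
    exact ⟨e, ht₁d.trans hde, ht₂e⟩
end

section
/- Interpreting A_{XY} as X ⊆ Y, E_{XY} as X ∩ Y = ∅, I_{XY} as X ∩ Y ≠ ∅, and O_{XY} as X \ Y ≠ ∅: if A_{i} ⊆ A_{i−1} for 2 ≤ i ≤ k, A_k ∩ A_{k+1} ≠ ∅, A_j ⊆ A_{j+1} for k+1 ≤ j ≤ m−1, A_m ∩ A_{m+1} = ∅, and A_{l+1} ⊆ A_l for m+1 ≤ l ≤ n−1, then A₁ \ A_n ≠ ∅. -/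
theorem stmt_16 {U : Type*} (n k m : ℕ) (hk : 1 ≤ k) (hkm : k < m) (hmn : m < n)
    (A : ℕ → Set U)
    (hdown₁ : ∀ i, 2 ≤ i → i ≤ k → A i ⊆ A (i - 1))
    (hmeet : A k ∩ A (k + 1) ≠ ∅)
    (hup : ∀ j, k + 1 ≤ j → j ≤ m - 1 → A j ⊆ A (j + 1))
    (hdisj : A m ∩ A (m + 1) = ∅)
    (hdown₂ : ∀ l, m + 1 ≤ l → l ≤ n - 1 → A (l + 1) ⊆ A l) :
    A 1 \ A n ≠ ∅ := by
  obtain ⟨x, hxk, hxk1⟩ := Set.nonempty_iff_ne_empty.2 hmeet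
  -- x ∈ A 1 by descending from k
  have hdown : ∀ i, 1 ≤ i → i ≤ k → x ∈ A i → x ∈ A 1 := by
    intro i
    induction i with
    | zero => omega
    | succ j ih =>
      intro h1 h2 hx
      rcases Nat.eq_or_lt_of_le h1 with h | h
      · simpa [← h] using hx
      · have hj : x ∈ A j := by
          have := hdown₁ (j + 1) (by omega) h2 hx
          simpa using this
        exact ih (by omega) (by omega) hj
  have hx1 : x ∈ A 1 := hdown k hk le_rfl hxk
  -- x ∈ A m by ascending from k+1
  have hupm : ∀ j, k + 1 ≤ j → j ≤ m → x ∈ A j := by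
    intro j
    induction j with
    | zero => omega
    | succ i ih =>
      intro h1 h2
      rcases Nat.eq_or_lt_of_le h1 with h | h
      · simpa [← h] using hxk1
      · exact hup i (by omega) (by omega) (ih (by omega) (by omega))
  have hxm : x ∈ A m := hupm m (by omega) le_rfl
  -- conclude: x ∉ A n
  intro hcon
  have hxnotm1 : x ∉ A (m + 1) := fun h => by
    have : x ∈ A m ∩ A (m + 1) := ⟨hxm, h⟩
    simp [hdisj] at this
  have hxn : x ∉ A n := by
    intro hxn
    -- descend from n to m+1
    have key : ∀ d, m + 1 + d ≤ n → x ∈ A (m + 1 + d) → x ∈ A (m + 1) := by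
      intro d
      induction d with
      | zero => intro _ h; simpa using h
      | succ e ih =>
        intro h1 h2
        apply ih (by omega)
        have := hdown₂ (m + 1 + e) (by omega) (by omega)
        have h2' : x ∈ A (m + 1 + e + 1) := by
          have : m + 1 + (e + 1) = m + 1 + e + 1 := by omega
          rwa [this] at h2
        exact this h2'
    obtain ⟨d, hd⟩ : ∃ d, n = m + 1 + d := ⟨n - (m+1), by omega⟩
    exact hxnotm1 (key d (by omega) (by rw [← hd]; exact hxn))
  exact Set.nonempty_iff_ne_empty.mp (⟨x, hx1, hxn⟩ : (A 1 \ A n).Nonempty) hcon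
end
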